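/- Let 1 ≤ p < ∞, let X be a separable complex Banach space with a countable dense (ℚ+iℚ)-subspace B, and let (ℳ, D(ℳ)) be the operator-valued multiplication operator on L^p(Ω,X) induced by a family (M(s), D(M(s)))_{s∈Ω} of linear operators on X such that: M(s) generates a C₀-semigroup on X for μ-almost every s; 0 ∈ ρ(M(s)) for μ-almost every s with s ↦ M(s)^{-1} in L^∞(Ω,L_s(X)) (so that 0 ∈ ρ(ℳ)); and s ↦ M(s)b and s ↦ M(s)^{-1}b are measurable for each b ∈ B. Let (X_{-1,s}, ‖·‖_{-1,s})_{s∈Ω} be the measurable Banach fiber bundle of extrapolation spaces (fibers being the completions of X with respect to ‖x‖_{-1,s} = ‖M(s)^{-1}x‖, with countable set B). Then the extrapolation space [L^p(Ω,X)]_{-1}(ℳ) equals the L^p-fiber space L^p(Ω,(X_{-1,s})_{s∈Ω}); precisely, the natural inclusion ι : L^p(Ω,X) → L^p(Ω,(X_{-1,s})_{s∈Ω}) (sending g to the function s ↦ g(s), with X embedded in X_{-1,s}) is well defined, satisfies ‖ι(g)‖_{L^p(Ω,(X_{-1,s}))} = ‖ℳ^{-1}g‖_{L^p(Ω,X)} for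 all g ∈ L^p(Ω,X), and has dense range, so that the completion of L^p(Ω,X) with respect to the norm f ↦ ‖ℳ^{-1}f‖_{L^p(Ω,X)} is isometrically isomorphic to L^p(Ω,(X_{-1,s})_{s∈Ω}) via the continuous extension of ι. -/

import Mathlib

open MeasureTheory Filter
open scoped ENNReal NNReal

noncomputable section

/-- `R` is the resolvent operator of the (possibly unbounded) operator `A` at `lam`. -/
def IsResolvent {X : Type*} [NormedAddCommGroup X] [NormedSpace ℂ X]
    (A : X →ₗ.[ℂ] X) (lam : ℂ) (R : X →L[ℂ] X) : Prop :=
  ∃ hR : ∀ x : X, R x ∈ A.domain,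
    (∀ x : X, lam • R x - A ⟨R x, hR x⟩ = x) ∧
    ∀ y : A.domain, R (lam • (y : X) - A y) = y

def InResolventSet {X : Type*} [NormedAddCommGroup X] [NormedSpace ℂ X]
    (A : X →ₗ.[ℂ] X) (lam : ℂ) : Prop :=
  ∃ R : X →L[ℂ] X, IsResolvent A lam R

def IsBoundedInverse {X : Type*} [NormedAddCommGroup X] [NormedSpace ℂ X]
    (A : X →ₗ.[ℂ] X) (B : X →L[ℂ] X) : Prop :=
  ∃ hB : ∀ x : X, B x ∈ A.domain,
    (∀ x : X, A ⟨B x, hB x⟩ = x) ∧ ∀ y : A.domain, B (A y) = y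

/-- `𝓜` is the operator-valued multiplication operator on `L^p(Ω,X)` with fibers `M s`. -/
def IsMulOp {Ω : Type*} [MeasurableSpace Ω] (μ : Measure Ω)
    {X : Type*} [NormedAddCommGroup X] [NormedSpace ℂ X] (p : ℝ≥0∞) [Fact (1 ≤ p)]
    (M : Ω → X →ₗ.[ℂ] X) (𝓜 : Lp X p μ →ₗ.[ℂ] Lp X p μ) : Prop :=
  (∀ f : Lp X p μ, f ∈ 𝓜.domain ↔
    ∃ g : Lp X p μ, ∀ᵐ s ∂μ, ∃ h : f s ∈ (M s).domain, g s = M s ⟨f s, h⟩) ∧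
  ∀ f : 𝓜.domain, ∀ᵐ s ∂μ, ∃ h : (f : Lp X p μ) s ∈ (M s).domain,
    (𝓜 f) s = M s ⟨(f : Lp X p μ) s, h⟩

def IsC0Semigroup {Y : Type*} [NormedAddCommGroup Y] [NormedSpace ℂ Y]
    (T : ℝ → Y →L[ℂ] Y) : Prop :=
  T 0 = 1 ∧ (∀ t r : ℝ, 0 ≤ t → 0 ≤ r → T (t + r) = T t ∘L T r) ∧
  ∀ y : Y, ContinuousOn (fun t => T t y) (Set.Ici (0 : ℝ))

def IsGenerator {Y : Type*} [NormedAddCommGroup Y] [NormedSpace ℂ Y]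
    (T : ℝ → Y →L[ℂ] Y) (A : Y →ₗ.[ℂ] Y) : Prop :=
  (∀ y : Y, y ∈ A.domain ↔
    ∃ z : Y, Tendsto (fun t : ℝ => t⁻¹ • (T t y - y)) (nhdsWithin 0 (Set.Ioi 0)) (nhds z)) ∧
  ∀ y : A.domain, Tendsto (fun t : ℝ => t⁻¹ • (T t (y : Y) - (y : Y)))
    (nhdsWithin 0 (Set.Ioi 0)) (nhds (A y))

/-- A function `f` into the fibers of a measurable Banach fiber bundle is *fiber measurable*
(w.r.t. the countable generating family `b k`, the fiberwise images of the set `B`) if it is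
`μ`-a.e. the pointwise limit of measurable simple functions with values in `B`. -/
def FiberMeasurable {Ω : Type*} [MeasurableSpace Ω] {Xf : Ω → Type*}
    [∀ s, NormedAddCommGroup (Xf s)]
    (μ : MeasureTheory.Measure Ω) (b : ℕ → ∀ s, Xf s) (f : ∀ s, Xf s) : Prop :=
  ∃ k : ℕ → Ω → ℕ, (∀ j, Measurable (k j) ∧ (Set.range (k j)).Finite) ∧
    ∀ᵐ s ∂μ, Filter.Tendsto (fun j => b (k j s) s) Filter.atTop (nhds (f s))

/-- A fiber measurable function is *fiber `p`-integrable* if `∫ ‖f(s)‖_s^p dμ(s) < ∞`. -/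
def FiberPIntegrable {Ω : Type*} [MeasurableSpace Ω] {Xf : Ω → Type*}
    [∀ s, NormedAddCommGroup (Xf s)]
    (μ : MeasureTheory.Measure Ω) (b : ℕ → ∀ s, Xf s) (p : ℝ) (f : ∀ s, Xf s) : Prop :=
  FiberMeasurable μ b f ∧ (∫⁻ s, ENNReal.ofReal (‖f s‖ ^ p) ∂μ) < ⊤

/-- The countable family `b k` presents a measurable Banach fiber bundle `(X_s)_{s∈Ω}`:
the norms `s ↦ ‖b_k‖_s` are measurable, the family is fiberwise a `ℚ+iℚ`-vector space, and
fiberwise dense (the fiber `X_s` is the completion of `B/N_s`). -/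
def IsFiberBasis {Ω : Type*} [MeasurableSpace Ω] {Xf : Ω → Type*}
    [∀ s, NormedAddCommGroup (Xf s)] [∀ s, NormedSpace ℂ (Xf s)]
    (b : ℕ → ∀ s, Xf s) : Prop :=
  (∀ k, Measurable fun s => ‖b k s‖) ∧
  (∃ k₀, ∀ s, b k₀ s = 0) ∧
  (∀ k l, ∃ m, ∀ s, b m s = b k s + b l s) ∧
  (∀ (q r : ℚ) (k : ℕ), ∃ m, ∀ s, b m s = ((q : ℂ) + (r : ℂ) * Complex.I) • b k s) ∧
  ∀ s, DenseRange fun k => b k s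

attribute [local instance] Classical.propDecidable

/-- (Theorem 3.3) The extrapolation space `[L^p(Ω,X)]_{-1}(ℳ)` of the Bochner
space `L^p(Ω,X)` with respect to the operator-valued multiplication operator `ℳ` equals the
`L^p`-fiber space `L^p(Ω,(X_{-1,s})_{s∈Ω})`: the natural inclusion
`ι : L^p(Ω,X) → L^p(Ω,(X_{-1,s})_{s∈Ω})`, `g ↦ (s ↦ g(s))` (with `X ⊆ X_{-1,s}` via `jmap s`)
is well defined, satisfies `‖ι(g)‖ = ‖ℳ⁻¹g‖_{L^p(Ω,X)}`, and has dense range; hence the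
completion of `L^p(Ω,X)` with respect to `f ↦ ‖ℳ⁻¹f‖` is isometrically isomorphic to
`L^p(Ω,(X_{-1,s})_{s∈Ω})` via the continuous extension of `ι`. -/
theorem extrapolation_space_eq_lp_fiber_space
    {Ω : Type*} [MeasurableSpace Ω] {μ : Measure Ω} [SigmaFinite μ]
    {X : Type*} [NormedAddCommGroup X] [NormedSpace ℂ X] [CompleteSpace X]
    [TopologicalSpace.SeparableSpace X]
    {p : ℝ≥0∞} [Fact (1 ≤ p)] (hp : p ≠ ∞)
    -- the countable dense `ℚ+iℚ`-subspace `B = {bB k : k ∈ ℕ}` of `X`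
    (bB : ℕ → X) (hBd : DenseRange bB)
    (hB0 : ∃ k₀, bB k₀ = 0)
    (hBadd : ∀ k l, ∃ m, bB m = bB k + bB l)
    (hBsmul : ∀ (q r : ℚ) (k : ℕ), ∃ m, bB m = ((q : ℂ) + (r : ℂ) * Complex.I) • bB k)
    -- the fiber operators: a.e. generators of `C₀`-semigroups with `0 ∈ ρ(M(s))`
    (M : Ω → X →ₗ.[ℂ] X)
    (hgen : ∀ᵐ s ∂μ, ∃ T : ℝ → X →L[ℂ] X, IsC0Semigroup T ∧ IsGenerator T (M s))
    (Minv : Ω → X →L[ℂ] X) (hinv : ∀ᵐ s ∂μ, IsBoundedInverse (M s) (Minv s))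
    -- `s ↦ M(s)⁻¹` belongs to `L^∞(Ω,L_s(X))`
    (hLinf : ∀ x : X, MemLp (fun s => Minv s x) ∞ μ)
    -- measurability of `s ↦ M(s)b` and `s ↦ M(s)⁻¹b` for `b ∈ B`
    (hMinvmeas : ∀ k, AEStronglyMeasurable (fun s => Minv s (bB k)) μ)
    (hMmeas : ∀ k, AEStronglyMeasurable
      (fun s => if h : bB k ∈ (M s).domain then M s ⟨bB k, h⟩ else 0) μ)
    -- the induced multiplication operator `ℳ`, with `0 ∈ ρ(ℳ)` and `ℳ⁻¹ = Rinv = M(·)⁻¹`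
    (𝓜 : Lp X p μ →ₗ.[ℂ] Lp X p μ) (hMul : IsMulOp μ p M 𝓜)
    (Rinv : Lp X p μ →L[ℂ] Lp X p μ) (hRinv : IsBoundedInverse 𝓜 Rinv)
    (hRrep : ∀ f : Lp X p μ, ∀ᵐ s ∂μ, (Rinv f) s = Minv s (f s))
    -- the measurable Banach fiber bundle of extrapolated fibers `X_{-1,s}`
    (Xm : Ω → Type*) [∀ s, NormedAddCommGroup (Xm s)] [∀ s, NormedSpace ℂ (Xm s)]
    [∀ s, CompleteSpace (Xm s)]
    (jmap : ∀ s, X →ₗ[ℂ] Xm s)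
    (hj : ∀ᵐ s ∂μ, (∀ x : X, ‖jmap s x‖ = ‖Minv s x‖) ∧ DenseRange (jmap s)) :
    -- `ι` is well defined: `ι(g)` lies in the `L^p`-fiber space …
    (∀ g : Lp X p μ,
      FiberPIntegrable μ (fun k s => jmap s (bB k)) p.toReal (fun s => jmap s (g s))) ∧
    -- … it is isometric for the extrapolation norm: `‖ι(g)‖ = ‖ℳ⁻¹g‖_{L^p(Ω,X)}` …
    (∀ g : Lp X p μ,
      (∫⁻ s, ENNReal.ofReal (‖jmap s (g s)‖ ^ p.toReal) ∂μ) ^ (1 / p.toReal)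
        = eLpNorm (⇑(Rinv g)) p μ) ∧
    -- … and it has dense range in `L^p(Ω,(X_{-1,s})_{s∈Ω})`
    ∀ f : ∀ s, Xm s, FiberPIntegrable μ (fun k s => jmap s (bB k)) p.toReal f →
      ∀ ε : ℝ, 0 < ε → ∃ g : Lp X p μ,
        (∫⁻ s, ENNReal.ofReal (‖f s - jmap s (g s)‖ ^ p.toReal) ∂μ)
          < ENNReal.ofReal (ε ^ p.toReal) := by
  
  classical
  have hp1 : (1:ℝ≥0∞) ≤ p := Fact.out
  have hp0 : p ≠ 0 := by
    intro h
    rw [h] at hp1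
    exact absurd hp1 (by norm_num)
  have hpt : 0 < p.toReal := ENNReal.toReal_pos hp0 hp
  borelize X
  -- selection lemma: composing a finite-range measurable index with an a.e.s.m. family
  have hsel : ∀ κ : Ω → ℕ, Measurable κ → (Set.range κ).Finite →
      ∀ F : ℕ → Ω → X, (∀ m, AEStronglyMeasurable (F m) μ) →
      AEStronglyMeasurable (fun s => F (κ s) s) μ := by
    intro κ hκ hfin F hF
    have heq : (fun s => F (κ s) s)
        = fun s => ∑ m ∈ hfin.toFinset, (κ ⁻¹' {m}).indicator (F m) s := by
      funext s
      rw [Finset.sum_eq_single (κ s)]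
      · rw [Set.indicator_of_mem (by simp : s ∈ κ ⁻¹' {κ s})]
      · intro m _ hne
        apply Set.indicator_of_notMem
        simp only [Set.mem_preimage, Set.mem_singleton_iff]
        exact fun h => hne h.symm
      · intro h
        exact absurd (hfin.mem_toFinset.mpr ⟨s, rfl⟩) h
    rw [heq]
    exact Finset.aestronglyMeasurable_fun_sum _
      (fun m _ => (hF m).indicator (hκ (measurableSet_singleton m)))
  -- the isometry identity
  have key : ∀ g : Lp X p μ,
      (∫⁻ s, ENNReal.ofReal (‖jmap s (g s)‖ ^ p.toReal) ∂μ)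
        = eLpNorm (⇑(Rinv g)) p μ ^ p.toReal := by
    intro g
    have hcong : (fun s => ENNReal.ofReal (‖jmap s (g s)‖ ^ p.toReal))
        =ᵐ[μ] fun s => (‖(Rinv g) s‖₊ : ℝ≥0∞) ^ p.toReal := by
      filter_upwards [hj, hRrep g] with s hs hr
      rw [hs.1, ← hr, ← ENNReal.ofReal_rpow_of_nonneg (norm_nonneg _) hpt.le,
        ofReal_norm, enorm_eq_nnnorm]
    rw [lintegral_congr_ae hcong, eLpNorm_eq_lintegral_rpow_enorm_toReal hp0 hp,
      ← ENNReal.rpow_mul, one_div, inv_mul_cancel₀ hpt.ne', ENNReal.rpow_one]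
    rfl
  -- approximation of strongly measurable functions by `B`-valued simple functions
  haveI hSsep : TopologicalSpace.SeparableSpace ↥(Set.range bB) := by
    have := (Set.countable_range bB).to_subtype
    infer_instance
  obtain ⟨k₀, hk₀⟩ := hB0
  have hk₀mem : bB k₀ ∈ Set.range bB := ⟨k₀, rfl⟩
  set c : X → ℕ := fun x => if h : ∃ m, bB m = x then h.choose else 0 with hc
  have hbc : ∀ x, x ∈ Set.range bB → bB (c x) = x := by
    intro x hx
    obtain ⟨m, hm⟩ := hx
    have hex : ∃ m, bB m = x := ⟨m, hm⟩
    simp only [hc, dif_pos hex]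
    exact hex.choose_spec
  have fmX : ∀ gm : Ω → X, StronglyMeasurable gm →
      ∃ k : ℕ → Ω → ℕ, (∀ j, Measurable (k j) ∧ (Set.range (k j)).Finite) ∧
        ∀ s, Tendsto (fun j => bB (k j s)) atTop (nhds (gm s)) := by
    intro gm hgm
    set φ := fun j => SimpleFunc.approxOn gm hgm.measurable (Set.range bB) (bB k₀) hk₀mem j
      with hφdef
    refine ⟨fun j s => c (φ j s), fun j => ⟨?_, ?_⟩, fun s => ?_⟩
    · have h1 : Measurable ⇑((φ j).map c) := ((φ j).map c).measurable
      have h2 : ⇑((φ j).map c) = fun s => c (φ j s) := rfl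
      rwa [h2] at h1
    · have h1 := ((φ j).map c).finite_range
      have h2 : ⇑((φ j).map c) = fun s => c (φ j s) := rfl
      rwa [h2] at h1
    · have hmem : ∀ j, φ j s ∈ Set.range bB :=
        fun j => SimpleFunc.approxOn_mem hgm.measurable hk₀mem j s
      have ht := SimpleFunc.tendsto_approxOn hgm.measurable hk₀mem (x := s) (hBd (gm s))
      exact ht.congr fun j => (hbc _ (hmem j)).symm
  -- fiber measurability of `ι g`
  have fmI : ∀ g : Lp X p μ,
      FiberMeasurable μ (fun k s => jmap s (bB k)) (fun s => jmap s (g s)) := by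
    intro g
    obtain ⟨k, hk, hconv⟩ := fmX ((Lp.aestronglyMeasurable g).mk _)
      (Lp.aestronglyMeasurable g).stronglyMeasurable_mk
    refine ⟨k, hk, ?_⟩
    filter_upwards [hj, (Lp.aestronglyMeasurable g).ae_eq_mk] with s hs hgs
    rw [tendsto_iff_norm_sub_tendsto_zero]
    have hb : ∀ j, ‖jmap s (bB (k j s)) - jmap s (g s)‖ ≤ ‖Minv s‖ * ‖bB (k j s) - g s‖ := by
      intro j
      rw [← map_sub, hs.1]
      exact (Minv s).le_opNorm _
    have h0 : Tendsto (fun j => ‖bB (k j s) - g s‖) atTop (nhds 0) := by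
      have := hconv s
      rw [← hgs] at this
      exact tendsto_iff_norm_sub_tendsto_zero.mp this
    have h1 := h0.const_mul ‖Minv s‖
    rw [mul_zero] at h1
    exact squeeze_zero (fun j => norm_nonneg _) hb h1
  refine ⟨fun g => ⟨fmI g, ?_⟩, fun g => ?_, ?_⟩
  · rw [key g]
    exact ENNReal.rpow_lt_top_of_nonneg hpt.le (Lp.eLpNorm_lt_top _).ne
  · rw [key g, ← ENNReal.rpow_mul, mul_one_div, div_self hpt.ne', ENNReal.rpow_one]
  -- density of the range
  rintro f ⟨⟨kf, hkf, hfconv⟩, hfint⟩ ε hε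
  have hMk : ∀ n, AEStronglyMeasurable (fun s => Minv s (bB (kf n s))) μ :=
    fun n => hsel (kf n) (hkf n).1 (hkf n).2 (fun m s => Minv s (bB m)) hMinvmeas
  set u : ℕ → Ω → ℝ := fun n s => ‖Minv s (bB (kf n s))‖ with hu
  have hum : ∀ n, AEMeasurable (u n) μ := fun n => (hMk n).norm.aemeasurable
  set w : ℕ → Ω → ℝ := fun n => (hum n).mk _ with hw
  have hwm : ∀ n, Measurable (w n) := fun n => (hum n).measurable_mk
  have hwe : ∀ n, u n =ᵐ[μ] w n := fun n => (hum n).ae_eq_mk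
  have hnf : AEMeasurable (fun s => ‖f s‖) μ := by
    apply aemeasurable_of_tendsto_metrizable_ae atTop (fun n => (hwm n).aemeasurable)
    filter_upwards [hj, hfconv, ae_all_iff.mpr hwe] with s hs hcv hwes
    have heqw : ∀ n, ‖jmap s (bB (kf n s))‖ = w n s := by
      intro n
      rw [hs.1]
      exact hwes n
    exact hcv.norm.congr heqw
  set v : Ω → ℝ := hnf.mk _ with hv
  have hvm : Measurable v := hnf.measurable_mk
  have hve : (fun s => ‖f s‖) =ᵐ[μ] v := hnf.ae_eq_mk
  set A : ℕ → Set Ω := fun n => spanningSets μ n ∩ {s | w n s ≤ 2 * v s} with hA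
  have hAm : ∀ n, MeasurableSet (A n) := fun n =>
    (measurableSet_spanningSets μ n).inter (measurableSet_le (hwm n) (hvm.const_mul 2))
  set φ : ℕ → Ω → X := fun n => (A n).indicator (fun s => bB (kf n s)) with hφ
  have hφaesm : ∀ n, AEStronglyMeasurable (φ n) μ := fun n =>
    (hsel (kf n) (hkf n).1 (hkf n).2 (fun m _ => bB m)
      (fun m => aestronglyMeasurable_const)).indicator (hAm n)
  have hφmem : ∀ n, MemLp (φ n) p μ := by
    intro n
    obtain ⟨C, hC⟩ : ∃ C : ℝ, ∀ s, ‖bB (kf n s)‖ ≤ C := by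
      obtain ⟨C, hC⟩ := ((hkf n).2.image fun m => ‖bB m‖).bddAbove
      exact ⟨C, fun s => hC (Set.mem_image_of_mem _ (Set.mem_range_self s))⟩
    refine ⟨hφaesm n, ?_⟩
    calc eLpNorm (φ n) p μ
        ≤ eLpNorm ((A n).indicator fun _ => (max C 0 : ℝ)) p μ := by
          apply eLpNorm_mono
          intro s
          by_cases hs : s ∈ A n
          · rw [hφ]
            simp only [Set.indicator_of_mem hs, Real.norm_eq_abs,
              abs_of_nonneg (le_max_right C 0)]
            exact (hC s).trans (le_max_left _ _)
          · rw [hφ]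
            simp [Set.indicator_of_notMem hs]
      _ = ‖(max C 0 : ℝ)‖₊ * μ (A n) ^ (1 / p.toReal) := eLpNorm_indicator_const (hAm n) hp0 hp
      _ < ⊤ := by
          refine ENNReal.mul_lt_top ENNReal.coe_lt_top ?_
          refine ENNReal.rpow_lt_top_of_nonneg (by positivity) ?_
          exact ((measure_mono Set.inter_subset_left).trans_lt
            (measure_spanningSets_lt_top μ n)).ne
  have hMφ : ∀ n, AEStronglyMeasurable (fun s => Minv s (φ n s)) μ := by
    intro n
    have heq2 : (fun s => Minv s (φ n s))
        = (A n).indicator fun s => Minv s (bB (kf n s)) := by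
      funext s
      by_cases hs : s ∈ A n
      · rw [hφ]
        simp [Set.indicator_of_mem hs]
      · rw [hφ]
        simp [Set.indicator_of_notMem hs]
    rw [heq2]
    exact (hMk n).indicator (hAm n)
  have herr : ∀ ψ : Ω → X, AEStronglyMeasurable (fun s => Minv s (ψ s)) μ →
      AEMeasurable (fun s => ‖f s - jmap s (ψ s)‖) μ := by
    intro ψ hψ
    apply aemeasurable_of_tendsto_metrizable_ae atTop
      (f := fun j s => ‖Minv s (bB (kf j s)) - Minv s (ψ s)‖)
      (fun j => ((hMk j).sub hψ).norm.aemeasurable)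
    filter_upwards [hj, hfconv] with s hs hcv
    have he : ∀ j, ‖jmap s (bB (kf j s)) - jmap s (ψ s)‖
        = ‖Minv s (bB (kf j s)) - Minv s (ψ s)‖ := by
      intro j
      rw [← map_sub, hs.1, map_sub]
    exact ((hcv.sub tendsto_const_nhds).norm).congr he
  have hFm : ∀ n, AEMeasurable
      (fun s => ENNReal.ofReal (‖f s - jmap s (φ n s)‖ ^ p.toReal)) μ := by
    intro n
    have h1 := (ENNReal.measurable_ofReal.comp_aemeasurable
      (herr _ (hMφ n))).pow_const p.toReal
    have heq3 : (fun s => ENNReal.ofReal (‖f s - jmap s (φ n s)‖ ^ p.toReal))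
        = fun s => (ENNReal.ofReal ‖f s - jmap s (φ n s)‖) ^ p.toReal := by
      funext s
      rw [ENNReal.ofReal_rpow_of_nonneg (norm_nonneg _) hpt.le]
    rw [heq3]
    exact h1
  set bound : Ω → ℝ≥0∞ := fun s => ENNReal.ofReal ((3 * ‖f s‖) ^ p.toReal) with hbdef
  have hb : ∀ n, (fun s => ENNReal.ofReal (‖f s - jmap s (φ n s)‖ ^ p.toReal))
      ≤ᵐ[μ] bound := by
    intro n
    filter_upwards [hj, hwe n, hve] with s hs hwn hvs
    have hle : ‖f s - jmap s (φ n s)‖ ≤ 3 * ‖f s‖ := by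
      by_cases hsA : s ∈ A n
      · have h1 : φ n s = bB (kf n s) := Set.indicator_of_mem hsA _
        have h2 : w n s ≤ 2 * v s := hsA.2
        rw [h1]
        calc ‖f s - jmap s (bB (kf n s))‖ ≤ ‖f s‖ + ‖jmap s (bB (kf n s))‖ := norm_sub_le _ _
          _ = ‖f s‖ + w n s := by rw [hs.1, ← hwn]
          _ ≤ ‖f s‖ + 2 * v s := by linarith
          _ = 3 * ‖f s‖ := by rw [← hvs]; ring
      · have h1 : φ n s = 0 := Set.indicator_of_notMem hsA _
        rw [h1, map_zero, sub_zero]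
        nlinarith [norm_nonneg (f s)]
    exact ENNReal.ofReal_le_ofReal (Real.rpow_le_rpow (norm_nonneg _) hle hpt.le)
  have hfin2 : (∫⁻ s, bound s ∂μ) ≠ ⊤ := by
    have heq4 : bound = fun s =>
        ENNReal.ofReal ((3:ℝ) ^ p.toReal) * ENNReal.ofReal (‖f s‖ ^ p.toReal) := by
      funext s
      simp only [hbdef]
      rw [Real.mul_rpow (by norm_num : (0:ℝ) ≤ 3) (norm_nonneg _),
        ENNReal.ofReal_mul (Real.rpow_nonneg (by norm_num : (0:ℝ) ≤ 3) _)]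
    rw [heq4, lintegral_const_mul' _ _ ENNReal.ofReal_ne_top]
    exact ENNReal.mul_ne_top ENNReal.ofReal_ne_top hfint.ne
  have hlim : ∀ᵐ s ∂μ, Tendsto
      (fun n => ENNReal.ofReal (‖f s - jmap s (φ n s)‖ ^ p.toReal)) atTop
      (nhds ((fun _ : Ω => (0:ℝ≥0∞)) s)) := by
    filter_upwards [hj, hfconv, ae_all_iff.mpr hwe, hve] with s hs hcv hwn hvs
    have herr0 : Tendsto (fun n => ‖f s - jmap s (φ n s)‖) atTop (nhds 0) := by
      rcases eq_or_ne (f s) 0 with hf0 | hf0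
      · have hzero : ∀ n, ‖f s - jmap s (φ n s)‖ = 0 := by
          intro n
          by_cases hsA : s ∈ A n
          · have h1 : φ n s = bB (kf n s) := Set.indicator_of_mem hsA _
            have h2 : w n s ≤ 2 * v s := hsA.2
            have h3 : v s = 0 := by rw [← hvs, hf0, norm_zero]
            have h4 : ‖jmap s (bB (kf n s))‖ = w n s := by rw [hs.1]; exact hwn n
            have h5 : ‖jmap s (bB (kf n s))‖ = 0 := by
              have := norm_nonneg (jmap s (bB (kf n s)))
              rw [h3, mul_zero] at h2
              linarith [h4 ▸ h2]
            rw [h1, hf0, zero_sub, norm_neg, h5]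
          · have h1 : φ n s = 0 := Set.indicator_of_notMem hsA _
            rw [h1, map_zero, sub_zero, hf0, norm_zero]
        exact tendsto_const_nhds.congr fun n => (hzero n).symm
      · have hpos : 0 < ‖f s‖ := norm_pos_iff.mpr hf0
        have hev1 : ∀ᶠ n in atTop, s ∈ spanningSets μ n := by
          obtain ⟨n₀, hn₀⟩ : ∃ n, s ∈ spanningSets μ n := by
            have h6 : s ∈ ⋃ n, spanningSets μ n := by
              rw [iUnion_spanningSets]
              trivial
            exact Set.mem_iUnion.mp h6
          exact eventually_atTop.mpr ⟨n₀, fun m hm => monotone_spanningSets μ hm hn₀⟩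
        have hev2 : ∀ᶠ n in atTop, w n s < 2 * v s := by
          have h7 : Tendsto (fun n => w n s) atTop (nhds ‖f s‖) := by
            apply hcv.norm.congr
            intro n
            rw [hs.1]
            exact hwn n
          have h8 : ‖f s‖ < 2 * v s := by rw [← hvs]; linarith
          exact h7.eventually_lt_const h8
        have hev : ∀ᶠ n in atTop,
            ‖f s - jmap s (bB (kf n s))‖ = ‖f s - jmap s (φ n s)‖ := by
          filter_upwards [hev1, hev2] with n h1 h2
          have hmemA : s ∈ A n := ⟨h1, le_of_lt h2⟩
          simp only [hφ, Set.indicator_of_mem hmemA]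
        have hlim2 : Tendsto (fun n => ‖f s - jmap s (bB (kf n s))‖) atTop (nhds 0) := by
          have h9 := tendsto_iff_norm_sub_tendsto_zero.mp hcv
          exact h9.congr fun n => norm_sub_rev _ _
        exact hlim2.congr' hev
    have hcont : Tendsto (fun x : ℝ => ENNReal.ofReal (x ^ p.toReal)) (nhds 0) (nhds 0) := by
      have h1 : ContinuousAt (fun x : ℝ => x ^ p.toReal) 0 :=
        Real.continuousAt_rpow_const 0 _ (Or.inr hpt.le)
      have h2 := (ENNReal.continuous_ofReal.tendsto _).comp h1.tendsto
      rwa [Real.zero_rpow hpt.ne', ENNReal.ofReal_zero] at h2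
    exact hcont.comp herr0
  have hdct : Tendsto
      (fun n => ∫⁻ s, ENNReal.ofReal (‖f s - jmap s (φ n s)‖ ^ p.toReal) ∂μ) atTop
      (nhds 0) := by
    have h10 := tendsto_lintegral_of_dominated_convergence' bound hFm hb hfin2 hlim
    rwa [lintegral_zero] at h10
  have hεpos : (0:ℝ≥0∞) < ENNReal.ofReal (ε ^ p.toReal) :=
    ENNReal.ofReal_pos.mpr (Real.rpow_pos_of_pos hε _)
  obtain ⟨n, hn⟩ := (hdct.eventually_lt_const hεpos).exists
  refine ⟨(hφmem n).toLp _, ?_⟩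
  have hcong2 : (fun s => ENNReal.ofReal (‖f s - jmap s (((hφmem n).toLp _) s)‖ ^ p.toReal))
      =ᵐ[μ] fun s => ENNReal.ofReal (‖f s - jmap s (φ n s)‖ ^ p.toReal) := by
    filter_upwards [(hφmem n).coeFn_toLp] with s hs
    rw [hs]
  rw [lintegral_congr_ae hcong2]
  exact hn
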